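/- (Verification of consistency condition (iii) for the log-normal family.) There exists a constant 0 < K < ∞ such that P( (1/n)∑_{j=1}^n (X_j − φ(μ̂^{(−j)}))² < K ) → 1 as n → ∞; that is, the average squared leave-one-out prediction error is bounded in probability. -/

import Mathlib

open MeasureTheory ProbabilityTheory Filter


lemma integrable_exp_gauss (c m : ℝ) :
    Integrable (fun x => Real.exp (c * x)) (gaussianReal m 1) := by
  rw [gaussianReal_of_var_ne_zero _ one_ne_zero]
  rw [integrable_withDensity_iff (measurable_gaussianPDF _ _)
    (ae_of_all _ fun x => ENNReal.ofReal_lt_top)]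
  have h1 : Integrable (fun x : ℝ => Real.exp (-(1/2) * x ^ 2)) volume :=
    integrable_exp_neg_mul_sq (by norm_num)
  have h2 := (h1.comp_sub_right (m + c)).const_mul
    ((Real.sqrt (2 * Real.pi))⁻¹ * Real.exp (c * m + c ^ 2 / 2))
  refine h2.congr (ae_of_all _ fun x => ?_)
  have hnn : 0 ≤ gaussianPDFReal m 1 x := gaussianPDFReal_nonneg m 1 x
  simp only [gaussianPDF_def]
  rw [ENNReal.toReal_ofReal hnn, gaussianPDFReal]
  push_cast
  rw [mul_assoc, ← Real.exp_add, mul_comm (Real.exp (c * x)), mul_assoc, ← Real.exp_add]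
  simp only [mul_one]
  congr 1
  rw [Real.exp_eq_exp]
  ring

lemma tendsto_measure_of_ae_eventually_mem {Ω : Type*} [MeasurableSpace Ω]
    (μ : Measure Ω) [IsProbabilityMeasure μ] (E : ℕ → Set Ω)
    (hE : ∀ n, MeasurableSet (E n)) (h : ∀ᵐ ω ∂μ, ∀ᶠ n in atTop, ω ∈ E n) :
    Tendsto (fun n => μ (E n)) atTop (nhds 1) := by
  set F : ℕ → Set Ω := fun n => ⋂ m ∈ Set.Ici n, E m with hF
  have hFmeas : ∀ n, MeasurableSet (F n) :=
    fun n => MeasurableSet.biInter (Set.to_countable _) fun m _ => hE m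
  have hFmono : Monotone F := fun i j hij => Set.biInter_subset_biInter_left
    (fun m hm => le_trans hij hm)
  have hU : Tendsto (fun n => μ (F n)) atTop (nhds (μ (⋃ n, F n))) :=
    tendsto_measure_iUnion_atTop hFmono
  have hone : μ (⋃ n, F n) = 1 := by
    have hsub : (⋃ n, F n)ᶜ ⊆ {ω | ¬ ∀ᶠ n in atTop, ω ∈ E n} := by
      intro ω hω hcon
      obtain ⟨N, hN⟩ := eventually_atTop.mp hcon
      exact hω (Set.mem_iUnion.mpr ⟨N, Set.mem_iInter₂.mpr fun m hm => hN m hm⟩)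
    have h0 : μ ((⋃ n, F n)ᶜ) = 0 := measure_mono_null hsub h
    have := measure_compl (MeasurableSet.iUnion hFmeas) (measure_ne_top μ _)
    rw [h0, measure_univ] at this
    have hle : μ (⋃ n, F n) ≤ 1 := prob_le_one
    have := (tsub_eq_zero_iff_le).mp this.symm
    exact le_antisymm hle this
  rw [← hone]
  refine tendsto_of_tendsto_of_tendsto_of_le_of_le hU
    (by rw [hone]; exact tendsto_const_nhds) (fun n => measure_mono ?_)
    (fun n => prob_le_one)
  exact Set.biInter_subset_of_mem (Set.mem_Ici.mpr le_rfl)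



/-- Leave-one-out mean from the first `n` observations, deleting the `j`-th one. -/
noncomputable def looM {Ω : Type*} (Y : ℕ → Ω → ℝ) (n j : ℕ) (ω : Ω) : ℝ :=
  (1 / ((n : ℝ) - 1)) * ∑ k ∈ (Finset.range n).erase j, Y k ω

/-- For i.i.d. log-normal data `X_j = e^{Y_j}`, the average squared leave-one-out
prediction error `(1/n)∑ⱼ (X_j − φ(μ̂^{(−j)}))²`, `φ(t) = e^{t+1/2}`, is bounded
in probability: there is `0 < K < ∞` with
`P((1/n)∑ⱼ (X_j − φ(μ̂^{(−j)}))² < K) → 1`. -/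
theorem stmt_18 {Ω : Type*} [MeasurableSpace Ω] (μ : Measure Ω) [IsProbabilityMeasure μ]
    (μ0 : ℝ) (Y : ℕ → Ω → ℝ) (hmeas : ∀ k, Measurable (Y k))
    (hindep : iIndepFun Y μ)
    (hdist : ∀ k, Measure.map (Y k) μ = gaussianReal μ0 1) :
    ∃ K : ℝ, 0 < K ∧
      Tendsto (fun n : ℕ => μ {ω |
          (1 / (n : ℝ)) * ∑ j ∈ Finset.range n,
              (Real.exp (Y j ω) - Real.exp (looM Y n j ω + 1 / 2)) ^ 2 < K})
        atTop (nhds 1) := by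
  -- Strong law helper
  have key : ∀ g : ℝ → ℝ, Measurable g → Integrable g (gaussianReal μ0 1) →
      ∀ᵐ ω ∂μ, Tendsto (fun n : ℕ => (∑ i ∈ Finset.range n, g (Y i ω)) / n) atTop
        (nhds (∫ ω, g (Y 0 ω) ∂μ)) := by
    intro g hg hgint
    have h2 : Integrable g (Measure.map (Y 0) μ) := by rw [hdist 0]; exact hgint
    have hint : Integrable (fun ω => g (Y 0 ω)) μ :=
      (integrable_map_measure hg.aestronglyMeasurable (hmeas 0).aemeasurable).mp h2
    exact strong_law_ae_real (fun i ω => g (Y i ω)) hint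
      (fun i j hij => (hindep.indepFun hij).comp hg hg)
      (fun i => IdentDistrib.comp
        ⟨(hmeas i).aemeasurable, (hmeas 0).aemeasurable, by rw [hdist i, hdist 0]⟩ hg)
  set a := ∫ ω, Real.exp (2 * Y 0 ω) ∂μ with ha_def
  set b := ∫ ω, Real.exp (-(2 * Y 0 ω)) ∂μ with hb_def
  set mY := ∫ ω, Y 0 ω ∂μ with hm_def
  have ha0 : 0 ≤ a := integral_nonneg fun ω => (Real.exp_pos _).le
  have hb0 : 0 ≤ b := integral_nonneg fun ω => (Real.exp_pos _).le
  set c := 2 * Real.exp (2 * mY + 2) with hc_def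
  have hc0 : 0 ≤ c := by positivity
  refine ⟨2 * (a + 1) + c * (a + b + 2) + 1, by nlinarith, ?_⟩
  set K := 2 * (a + 1) + c * (a + b + 2) + 1 with hK_def
  -- measurability of the events
  have hEmeas : ∀ n : ℕ, MeasurableSet {ω : Ω |
      (1 / (n : ℝ)) * ∑ j ∈ Finset.range n,
          (Real.exp (Y j ω) - Real.exp (looM Y n j ω + 1 / 2)) ^ 2 < K} := by
    intro n
    refine measurableSet_lt (Measurable.const_mul (Finset.measurable_sum _ fun j _ => ?_) _)
      measurable_const
    exact ((hmeas j).exp.sub ((((Finset.measurable_sum _ fun k _ => hmeas k).const_mul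
      (1 / ((n : ℝ) - 1))).add_const (1/2)).exp)).pow_const 2
  refine tendsto_measure_of_ae_eventually_mem μ _ hEmeas ?_
  -- strong laws
  have hA := key (fun x => Real.exp (2 * x)) ((measurable_id.const_mul 2).exp) (by
    simpa using integrable_exp_gauss 2 μ0)
  have hB := key (fun x => Real.exp (-(2 * x))) ((measurable_id.const_mul 2).neg.exp) (by
    have := integrable_exp_gauss (-2) μ0
    simpa [neg_mul] using this)
  have hId : Integrable (fun x : ℝ => x) (gaussianReal μ0 1) := by
    refine ((integrable_exp_gauss 1 μ0).add (integrable_exp_gauss (-1) μ0)).mono'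
      aestronglyMeasurable_id (ae_of_all _ fun x => ?_)
    simp only [one_mul, neg_one_mul, Real.norm_eq_abs, Pi.add_apply]
    refine abs_le.mpr ⟨?_, ?_⟩
    · have h1 := Real.add_one_le_exp (-x)
      have h2 := Real.exp_pos x
      linarith
    · have h1 := Real.add_one_le_exp x
      have h2 := Real.exp_pos (-x)
      linarith
  have hC := key (fun x => x) measurable_id hId
  -- ratio n/(n-1) → 1
  have hratio : Tendsto (fun n : ℕ => (n : ℝ) / ((n : ℝ) - 1)) atTop (nhds 1) := by
    have h2 : Tendsto (fun n : ℕ => 1 + ((n : ℝ) + -1)⁻¹) atTop (nhds (1 + 0)) :=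
      tendsto_const_nhds.add (tendsto_inv_atTop_zero.comp
        (tendsto_atTop_add_const_right atTop (-1) tendsto_natCast_atTop_atTop))
    rw [add_zero] at h2
    refine h2.congr' ?_
    filter_upwards [eventually_ge_atTop 2] with n hn
    have hn2 : (2 : ℝ) ≤ (n : ℝ) := by exact_mod_cast hn
    have h1' : (n : ℝ) + -1 ≠ 0 := by linarith
    rw [sub_eq_add_neg, eq_div_iff h1', add_mul, one_mul, inv_mul_cancel₀ h1']
    ring
  filter_upwards [hA, hB, hC] with ω hAw hBw hCw
  have hA' : ∀ᶠ n : ℕ in atTop,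
      (∑ i ∈ Finset.range n, Real.exp (2 * Y i ω)) / n < a + 1 :=
    hAw.eventually_lt_const (by linarith)
  have hB' : ∀ᶠ n : ℕ in atTop,
      (∑ i ∈ Finset.range n, Real.exp (-(2 * Y i ω))) / n < b + 1 :=
    hBw.eventually_lt_const (by linarith)
  have hCw2 : Tendsto (fun n : ℕ =>
      ((∑ i ∈ Finset.range n, Y i ω) / n) * ((n : ℝ) / ((n : ℝ) - 1))) atTop
      (nhds (mY * 1)) := hCw.mul hratio
  rw [mul_one] at hCw2
  have hC' : ∀ᶠ n : ℕ in atTop,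
      ((∑ i ∈ Finset.range n, Y i ω) / n) * ((n : ℝ) / ((n : ℝ) - 1)) < mY + 1/2 :=
    hCw2.eventually_lt_const (by linarith)
  filter_upwards [hA', hB', hC', eventually_ge_atTop 2] with n hAn hBn hCn hn
  have hn2 : (2 : ℝ) ≤ (n : ℝ) := by exact_mod_cast hn
  have hnpos : (0 : ℝ) < (n : ℝ) := by linarith
  have hd1 : (1 : ℝ) ≤ (n : ℝ) - 1 := by linarith
  have hdpos : (0 : ℝ) < (n : ℝ) - 1 := by linarith
  set T := ∑ k ∈ Finset.range n, Y k ω with hT_def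
  have hT : T / ((n : ℝ) - 1) < mY + 1/2 := by
    have heq : T / (n : ℝ) * ((n : ℝ) / ((n : ℝ) - 1)) = T / ((n : ℝ) - 1) := by
      field_simp
    rw [← heq]; exact hCn
  -- pointwise bound on each summand
  have hstep : ∀ j ∈ Finset.range n,
      (Real.exp (Y j ω) - Real.exp (looM Y n j ω + 1 / 2)) ^ 2 ≤
        2 * Real.exp (2 * Y j ω) + c * (Real.exp (2 * Y j ω) + Real.exp (-(2 * Y j ω))) := by
    intro j hj
    have hx : Real.exp (Y j ω) ^ 2 = Real.exp (2 * Y j ω) := by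
      rw [sq, ← Real.exp_add, two_mul]
    have hy : Real.exp (looM Y n j ω + 1 / 2) ^ 2 = Real.exp (2 * looM Y n j ω + 1) := by
      rw [sq, ← Real.exp_add]; congr 1; ring
    have hL : looM Y n j ω = (T - Y j ω) / ((n : ℝ) - 1) := by
      rw [looM, one_div_mul_eq_div]
      congr 1
      exact eq_sub_of_add_eq (Finset.sum_erase_add _ _ hj)
    have hyb : Real.exp (2 * looM Y n j ω + 1) ≤
        Real.exp (2 * mY + 2) * (Real.exp (2 * Y j ω) + Real.exp (-(2 * Y j ω))) := by
      have split : 2 * looM Y n j ω + 1 =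
          (2 * (T / ((n : ℝ) - 1)) + 1) + (-(2 * Y j ω) / ((n : ℝ) - 1)) := by
        rw [hL]; field_simp; ring
      rw [split, Real.exp_add]
      have h1 : Real.exp (2 * (T / ((n : ℝ) - 1)) + 1) ≤ Real.exp (2 * mY + 2) :=
        Real.exp_le_exp.mpr (by linarith)
      have h2 : Real.exp (-(2 * Y j ω) / ((n : ℝ) - 1)) ≤
          Real.exp (2 * Y j ω) + Real.exp (-(2 * Y j ω)) := by
        rcases le_or_gt 0 (Y j ω) with h | h
        · have hle : -(2 * Y j ω) / ((n : ℝ) - 1) ≤ 2 * Y j ω := by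
            have : -(2 * Y j ω) / ((n : ℝ) - 1) ≤ 0 :=
              div_nonpos_of_nonpos_of_nonneg (by linarith) (by linarith)
            linarith
          have := Real.exp_le_exp.mpr hle
          have := Real.exp_pos (-(2 * Y j ω))
          linarith
        · have hle : -(2 * Y j ω) / ((n : ℝ) - 1) ≤ -(2 * Y j ω) := by
            rw [div_le_iff₀ hdpos]
            nlinarith
          have := Real.exp_le_exp.mpr hle
          have := Real.exp_pos (2 * Y j ω)
          linarith
      exact mul_le_mul h1 h2 (Real.exp_pos _).le (Real.exp_pos _).le
    have hsq : (Real.exp (Y j ω) - Real.exp (looM Y n j ω + 1 / 2)) ^ 2 ≤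
        2 * Real.exp (Y j ω) ^ 2 + 2 * Real.exp (looM Y n j ω + 1 / 2) ^ 2 := by
      nlinarith [sq_nonneg (Real.exp (Y j ω) + Real.exp (looM Y n j ω + 1 / 2))]
    rw [hx, hy] at hsq
    rw [hc_def]
    linarith
  have hsum := Finset.sum_le_sum hstep
  set U := ∑ j ∈ Finset.range n, Real.exp (2 * Y j ω) with hU_def
  set V := ∑ j ∈ Finset.range n, Real.exp (-(2 * Y j ω)) with hV_def
  have hrhs : ∑ j ∈ Finset.range n,
      (2 * Real.exp (2 * Y j ω) + c * (Real.exp (2 * Y j ω) + Real.exp (-(2 * Y j ω))))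
      = 2 * U + c * (U + V) := by
    rw [Finset.sum_add_distrib, ← Finset.mul_sum, ← Finset.mul_sum, Finset.sum_add_distrib]
  rw [hrhs] at hsum
  have hmain : (1 / (n : ℝ)) * ∑ j ∈ Finset.range n,
      (Real.exp (Y j ω) - Real.exp (looM Y n j ω + 1 / 2)) ^ 2 ≤
      2 * (U / n) + c * (U / n + V / n) := by
    have h1 : (1 / (n : ℝ)) * ∑ j ∈ Finset.range n,
        (Real.exp (Y j ω) - Real.exp (looM Y n j ω + 1 / 2)) ^ 2 ≤
        (1 / (n : ℝ)) * (2 * U + c * (U + V)) :=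
      mul_le_mul_of_nonneg_left hsum (by positivity)
    have h2 : (1 / (n : ℝ)) * (2 * U + c * (U + V)) = 2 * (U / n) + c * (U / n + V / n) := by
      field_simp
    linarith
  have hfin : c * (U / n + V / n) ≤ c * (a + b + 2) :=
    mul_le_mul_of_nonneg_left (by linarith) hc0
  calc (1 / (n : ℝ)) * ∑ j ∈ Finset.range n,
      (Real.exp (Y j ω) - Real.exp (looM Y n j ω + 1 / 2)) ^ 2
      ≤ 2 * (U / n) + c * (U / n + V / n) := hmain
    _ < K := by rw [hK_def]; linarith
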